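/- Let Λ be a finite-dimensional k-algebra with a nondegenerate associative bilinear form ⟨-,-⟩_Λ, and let G be a finite group acting on Λ by k-algebra automorphisms. Then the bilinear form on the skew group algebra ΛG defined by ⟨λ ⊗ g, λ' ⊗ g'⟩ = ⟨λ, g(λ')⟩_Λ if gg' = e and 0 otherwise is nondegenerate: if x ∈ ΛG satisfies ⟨x, y⟩ = 0 for all y ∈ ΛG, then x = 0. Consequently ΛG is a Frobenius algebra. -/

import Mathlib

/-- The multiplication of the skew group algebra `ΛG`, modeled on the vector space of
functions `G → Λ` (the element `λ ⊗ g` being `Pi.single g λ`), where the finite group `G`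
acts on `Λ` via `ρ : G →* (Λ ≃ₐ[k] Λ)`.  It is the bilinear extension of
`(λ ⊗ g)(λ' ⊗ g') = λ g(λ') ⊗ gg'`. -/
def skewMul {k Λ G : Type*} [Field k] [Ring Λ] [Algebra k Λ] [Group G] [Fintype G]
    (ρ : G →* (Λ ≃ₐ[k] Λ)) (f f' : G → Λ) : G → Λ :=
  fun x => ∑ g : G, f g * ρ g (f' (g⁻¹ * x))

/-- The bilinear form on the skew group algebra `ΛG` which is the bilinear extension of
`⟨λ ⊗ g, λ' ⊗ g'⟩ = ⟨λ, g(λ')⟩_Λ` if `gg' = e` and `0` otherwise. -/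
def skewForm {k Λ G : Type*} [Field k] [Ring Λ] [Algebra k Λ] [Group G] [Fintype G]
    (ρ : G →* (Λ ≃ₐ[k] Λ)) (B : Λ → Λ → k) (f f' : G → Λ) : k :=
  ∑ g : G, B (f g) (ρ g (f' g⁻¹))

/-- If `Λ` is a finite-dimensional `k`-algebra with a nondegenerate
associative bilinear form `B`, and the finite group `G` acts on `Λ` by `k`-algebra
automorphisms, then the bilinear form on `ΛG` given by
`⟨λ ⊗ g, λ' ⊗ g'⟩ = ⟨λ, g(λ')⟩` if `gg' = e` and `0` otherwise is nondegenerate.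
Consequently `ΛG` is a Frobenius algebra. -/
theorem stmt_2 (k Λ G : Type*) [Field k] [Ring Λ] [Algebra k Λ] [FiniteDimensional k Λ]
    [Group G] [Fintype G] [DecidableEq G]
    (ρ : G →* (Λ ≃ₐ[k] Λ)) (B : Λ → Λ → k)
    -- `B` is bilinear
    (hadd_l : ∀ x x' y : Λ, B (x + x') y = B x y + B x' y)
    (hsmul_l : ∀ (c : k) (x y : Λ), B (c • x) y = c * B x y)
    (hadd_r : ∀ x y y' : Λ, B x (y + y') = B x y + B x y')
    (hsmul_r : ∀ (c : k) (x y : Λ), B x (c • y) = c * B x y)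
    -- `B` is associative
    (hassoc : ∀ x y z : Λ, B (x * y) z = B x (y * z))
    -- `B` is nondegenerate
    (hnd : ∀ x : Λ, (∀ y : Λ, B x y = 0) → x = 0) :
    -- the form on `ΛG` takes the stated values on elements `λ ⊗ g`
    (∀ (g g' : G) (a b : Λ), skewForm ρ B (Pi.single g a) (Pi.single g' b) =
      if g * g' = 1 then B a (ρ g b) else 0) ∧
    -- it is nondegenerate: if ⟨x, y⟩ = 0 for all y, then x = 0
    (∀ x : G → Λ, (∀ y : G → Λ, skewForm ρ B x y = 0) → x = 0) ∧
    -- consequently, ΛG is a Frobenius algebra: it admits a nondegenerate associative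
    -- bilinear form
    (∃ B' : (G → Λ) → (G → Λ) → k,
      (∀ x x' y, B' (x + x') y = B' x y + B' x' y) ∧
      (∀ (c : k) x y, B' (c • x) y = c * B' x y) ∧
      (∀ x y y', B' x (y + y') = B' x y + B' x y') ∧
      (∀ (c : k) x y, B' x (c • y) = c * B' x y) ∧
      (∀ x y z, B' (skewMul ρ x y) z = B' x (skewMul ρ y z)) ∧
      (∀ x, (∀ y, B' x y = 0) → x = 0)) := by
  have hz_l : ∀ y : Λ, B 0 y = 0 := by
    intro y; have h := hsmul_l 0 0 y; simpa using h
  have hz_r : ∀ x : Λ, B x 0 = 0 := by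
    intro x; have h := hsmul_r 0 x 0; simpa using h
  have hsum_l : ∀ (s : Finset G) (f : G → Λ) (y : Λ),
      B (∑ i ∈ s, f i) y = ∑ i ∈ s, B (f i) y := by
    intro s f y
    induction s using Finset.induction_on with
    | empty => simpa using hz_l y
    | insert _ _ hns ih => rw [Finset.sum_insert hns, Finset.sum_insert hns, hadd_l, ih]
  have hsum_r : ∀ (s : Finset G) (x : Λ) (f : G → Λ),
      B x (∑ i ∈ s, f i) = ∑ i ∈ s, B x (f i) := by
    intro s x f
    induction s using Finset.induction_on with
    | empty => simpa using hz_r x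
    | insert _ _ hns ih => rw [Finset.sum_insert hns, Finset.sum_insert hns, hadd_r, ih]
  have key1 : ∀ (g g' : G) (a b : Λ), skewForm ρ B (Pi.single g a) (Pi.single g' b) =
      if g * g' = 1 then B a (ρ g b) else 0 := by
    intro g g' a b
    unfold skewForm
    rw [Finset.sum_eq_single g]
    · by_cases h : g * g' = 1
      · have hg' : g⁻¹ = g' := inv_eq_of_mul_eq_one_right h
        rw [← hg']
        simp [h, Pi.single_eq_same]
      · have hne : g⁻¹ ≠ g' := by
          intro hh
          exact h (by rw [← hh]; group)
        rw [Pi.single_eq_same, Pi.single_eq_of_ne hne, map_zero, if_neg h]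
        exact hz_r a
    · intro b' _ hb'
      rw [Pi.single_eq_of_ne hb']
      exact hz_l _
    · intro h; exact absurd (Finset.mem_univ g) h
  have key2 : ∀ x : G → Λ, (∀ y : G → Λ, skewForm ρ B x y = 0) → x = 0 := by
    intro x hx
    funext g
    apply hnd
    intro c
    have h := hx (Pi.single g⁻¹ ((ρ g).symm c))
    unfold skewForm at h
    rw [Finset.sum_eq_single g] at h
    · rw [Pi.single_eq_same, AlgEquiv.apply_symm_apply] at h
      exact h
    · intro b' _ hb'
      have hne : b'⁻¹ ≠ g⁻¹ := fun hh => hb' (by simpa using congrArg (·⁻¹) hh)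
      rw [Pi.single_eq_of_ne hne, map_zero]
      exact hz_r _
    · intro hg; exact absurd (Finset.mem_univ g) hg
  refine ⟨key1, key2, skewForm ρ B, ?_, ?_, ?_, ?_, ?_, key2⟩
  · intro x x' y
    unfold skewForm
    simp only [Pi.add_apply, hadd_l, Finset.sum_add_distrib]
  · intro c x y
    unfold skewForm
    simp only [Pi.smul_apply, hsmul_l, Finset.mul_sum]
  · intro x y y'
    unfold skewForm
    simp only [Pi.add_apply, map_add, hadd_r, Finset.sum_add_distrib]
  · intro c x y
    unfold skewForm
    simp only [Pi.smul_apply, map_smul, hsmul_r, Finset.mul_sum]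
  · intro x y z
    unfold skewForm skewMul
    have L1 : ∀ g : G, B (∑ h : G, x h * ρ h (y (h⁻¹ * g))) (ρ g (z g⁻¹))
        = ∑ h : G, B (x h) (ρ h (y (h⁻¹ * g)) * ρ g (z g⁻¹)) := by
      intro g
      rw [hsum_l]
      exact Finset.sum_congr rfl (fun h _ => hassoc _ _ _)
    simp only [L1]
    rw [Finset.sum_comm]
    refine Finset.sum_congr rfl (fun h _ => ?_)
    rw [map_sum, hsum_r]
    refine Fintype.sum_equiv (Equiv.mulLeft h⁻¹) _ _ (fun g => ?_)
    have e1 : ρ h (y (h⁻¹ * g) * ρ (h⁻¹ * g) (z ((h⁻¹ * g)⁻¹ * h⁻¹)))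
        = ρ h (y (h⁻¹ * g)) * ρ h (ρ (h⁻¹ * g) (z ((h⁻¹ * g)⁻¹ * h⁻¹))) := map_mul _ _ _
    have e2 : (h⁻¹ * g)⁻¹ * h⁻¹ = g⁻¹ := by group
    have e3 : ρ h (ρ (h⁻¹ * g) (z g⁻¹)) = ρ g (z g⁻¹) := by
      have : ρ h * ρ (h⁻¹ * g) = ρ g := by rw [← map_mul]; congr 1; group
      calc ρ h (ρ (h⁻¹ * g) (z g⁻¹)) = (ρ h * ρ (h⁻¹ * g)) (z g⁻¹) := rfl
        _ = ρ g (z g⁻¹) := by rw [this]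
    simp only [Equiv.coe_mulLeft, e2] at *
    rw [e1, e3]
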